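/- In the $\ell^2$-product of Heisenberg groups $M = \ell^2(\mathbb{N},\mathbb{R}^3)$ with horizontal fields $X_n = \partial_{x_n} - (y_n/2)\partial_{z_n}$, $Y_n = \partial_{y_n} + (x_n/2)\partial_{z_n}$, for any two horizontal vector fields $X = \sum_n a_n X_n$, $Y = \sum_n b_n Y_n$ with constant coefficient sequences $a, b \in \ell^2(\mathbb{N},\mathbb{R})$, the Lie bracket is $[X, Y] = \sum_n a_n b_n \partial_{z_n}$, whose coefficient sequence $(a_n b_n)_n$ lies in $\ell^1(\mathbb{N},\mathbb{R}) \subsetneq \ell^2(\mathbb{N},\mathbb{R})$. -/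

import Mathlib

/-- The `ℓ²`-product of Heisenberg groups, `M = ℓ²(ℕ, ℝ³)`,
with coordinates `(xₙ, yₙ, zₙ)ₙ`. -/
abbrev M18 : Type := lp (fun _ : ℕ => ℝ × ℝ × ℝ) 2

/-- Lie bracket of vector fields on `M18`: `[V,W](q) = DW(q)V(q) - DV(q)W(q)`. -/
noncomputable def lieBracket18 (V W : M18 → M18) (q : M18) : M18 :=
  fderiv ℝ W q (V q) - fderiv ℝ V q (W q)

/-- Evaluation at `n` as a continuous linear map. -/
noncomputable def ev18 (n : ℕ) : M18 →L[ℝ] ℝ × ℝ × ℝ :=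
  LinearMap.mkContinuous
    { toFun := fun f => f n
      map_add' := fun f g => congrFun (lp.coeFn_add f g) n
      map_smul' := fun c f => congrFun (lp.coeFn_smul c f) n }
    1
    (fun f => by
      simpa using lp.norm_apply_le_norm (by norm_num : (2 : ENNReal) ≠ 0) f n)

@[simp] lemma ev18_apply (n : ℕ) (f : M18) : ev18 n f = f n := rfl

theorem stmt_18 (a b : lp (fun _ : ℕ => ℝ) 2) (X Y : M18 → M18)
    -- X = ∑ aₙ Xₙ, where Xₙ = ∂xₙ - (yₙ/2) ∂zₙ
    (hX : ∀ (q : M18) (n : ℕ), (X q) n = (a n, 0, -(a n) * (q n).2.1 / 2))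
    -- Y = ∑ bₙ Yₙ, where Yₙ = ∂yₙ + (xₙ/2) ∂zₙ
    (hY : ∀ (q : M18) (n : ℕ), (Y q) n = (0, b n, (b n) * (q n).1 / 2))
    (hXd : Differentiable ℝ X) (hYd : Differentiable ℝ Y) :
    -- the bracket is [X,Y] = ∑ aₙ bₙ ∂zₙ …
    (∀ (q : M18) (n : ℕ), (lieBracket18 X Y q) n = (0, 0, a n * b n)) ∧
    -- … whose coefficient sequence lies in ℓ¹ …
    Summable (fun n => |a n * b n|) ∧
    -- … which is a proper subspace of ℓ²: every ℓ¹ sequence is ℓ², not conversely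
    (∀ s : ℕ → ℝ, Summable (fun n => |s n|) → Summable (fun n => (s n) ^ 2)) ∧
    ∃ s : ℕ → ℝ, Summable (fun n => (s n) ^ 2) ∧ ¬ Summable (fun n => |s n|) := by
  refine ⟨?_, ?_, ?_, ?_⟩
  · -- the bracket computation
    intro q n
    -- coordinate projections as CLMs
    set πx : M18 →L[ℝ] ℝ :=
      (ContinuousLinearMap.fst ℝ ℝ (ℝ × ℝ)).comp (ev18 n) with hπx
    set πy : M18 →L[ℝ] ℝ :=
      (ContinuousLinearMap.fst ℝ ℝ ℝ).comp
        ((ContinuousLinearMap.snd ℝ ℝ (ℝ × ℝ)).comp (ev18 n)) with hπy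
    -- derivative of q ↦ (X q) n
    have hXn : ∀ v : M18, fderiv ℝ X q v n = (0, 0, -(a n) / 2 * (v n).2.1) := by
      have h1 : HasFDerivAt (fun q : M18 => (X q) n)
          (((0 : M18 →L[ℝ] ℝ)).prod (((0 : M18 →L[ℝ] ℝ)).prod ((-(a n) / 2) • πy))) q := by
        have hfun : (fun q : M18 => (X q) n)
            = fun q : M18 => ((a n : ℝ), (0 : ℝ), (-(a n) / 2) * πy q) := by
          funext p
          rw [hX p n]
          simp only [hπy]
          norm_num
          ring
        rw [hfun]
        exact HasFDerivAt.prodMk (hasFDerivAt_const _ _)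
          (HasFDerivAt.prodMk (hasFDerivAt_const _ _) (πy.hasFDerivAt.const_mul _))
      have h2 : HasFDerivAt (fun q : M18 => (X q) n)
          ((ev18 n).comp (fderiv ℝ X q)) q :=
        ((ev18 n).hasFDerivAt).comp q (hXd q).hasFDerivAt
      intro v
      have := h2.unique h1
      calc fderiv ℝ X q v n = ((ev18 n).comp (fderiv ℝ X q)) v := rfl
        _ = (0, 0, -(a n) / 2 * (v n).2.1) := by rw [this]; simp [hπy]
    -- derivative of q ↦ (Y q) n
    have hYn : ∀ v : M18, fderiv ℝ Y q v n = (0, 0, (b n) / 2 * (v n).1) := by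
      have h1 : HasFDerivAt (fun q : M18 => (Y q) n)
          (((0 : M18 →L[ℝ] ℝ)).prod (((0 : M18 →L[ℝ] ℝ)).prod (((b n) / 2) • πx))) q := by
        have hfun : (fun q : M18 => (Y q) n)
            = fun q : M18 => ((0 : ℝ), (b n : ℝ), ((b n) / 2) * πx q) := by
          funext p
          rw [hY p n]
          simp only [hπx]
          norm_num
          ring
        rw [hfun]
        exact HasFDerivAt.prodMk (hasFDerivAt_const _ _)
          (HasFDerivAt.prodMk (hasFDerivAt_const _ _) (πx.hasFDerivAt.const_mul _))
      have h2 : HasFDerivAt (fun q : M18 => (Y q) n)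
          ((ev18 n).comp (fderiv ℝ Y q)) q :=
        ((ev18 n).hasFDerivAt).comp q (hYd q).hasFDerivAt
      intro v
      have := h2.unique h1
      calc fderiv ℝ Y q v n = ((ev18 n).comp (fderiv ℝ Y q)) v := rfl
        _ = (0, 0, (b n) / 2 * (v n).1) := by rw [this]; simp [hπx]
    have hsub : (lieBracket18 X Y q) n
        = fderiv ℝ Y q (X q) n - fderiv ℝ X q (Y q) n := by
      have := lp.coeFn_sub (fderiv ℝ Y q (X q)) (fderiv ℝ X q (Y q))
      exact congrFun this n
    rw [hsub, hYn (X q), hXn (Y q), hX q n, hY q n]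
    simp only [Prod.mk_sub_mk]
    norm_num
    ring
  · -- ℓ¹ membership, via Cauchy–Schwarz / AM-GM
    have ha : Summable (fun n => (a n) ^ 2) := by
      have := lp.memℓp a
      rw [memℓp_gen_iff (by norm_num)] at this
      refine this.congr fun n => ?_
      rw [ENNReal.toReal_ofNat, Real.norm_eq_abs, Real.rpow_two, sq_abs]
    have hb : Summable (fun n => (b n) ^ 2) := by
      have := lp.memℓp b
      rw [memℓp_gen_iff (by norm_num)] at this
      refine this.congr fun n => ?_
      rw [ENNReal.toReal_ofNat, Real.norm_eq_abs, Real.rpow_two, sq_abs]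
    refine Summable.of_nonneg_of_le (fun n => abs_nonneg _)
      (fun n => ?_) ((ha.add hb).mul_left (1 / 2))
    have h := sq_nonneg (|a n| - |b n|)
    rw [abs_mul]
    nlinarith [sq_abs (a n), sq_abs (b n)]
  · -- ℓ¹ ⊆ ℓ²
    intro s hs
    refine Summable.of_nonneg_of_le (fun n => sq_nonneg _)
      (fun n => ?_) (hs.mul_left (∑' k, |s k|))
    have h1 : |s n| ≤ ∑' k, |s k| := Summable.le_tsum hs n (fun m _ => abs_nonneg _)
    calc (s n) ^ 2 = |s n| * |s n| := by rw [← abs_mul, ← sq, abs_sq]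
      _ ≤ (∑' k, |s k|) * |s n| := by
          exact mul_le_mul_of_nonneg_right h1 (abs_nonneg _)
  · -- strictness: harmonic sequence
    refine ⟨fun n => 1 / ((n : ℝ) + 1), ?_, ?_⟩
    · have : Summable (fun n : ℕ => 1 / (n : ℝ) ^ 2) := by
        rw [Real.summable_one_div_nat_pow]; norm_num
      have h2 := (summable_nat_add_iff 1).2 this
      refine h2.congr fun n => ?_
      push_cast
      rw [div_pow, one_pow]
    · intro h
      have : Summable (fun n : ℕ => 1 / ((n : ℝ) + 1)) := by
        refine h.congr fun n => ?_
        rw [abs_of_pos (by positivity)]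
      have h2 : Summable (fun n : ℕ => 1 / (n : ℝ)) := by
        rw [← summable_nat_add_iff 1]
        refine this.congr fun n => ?_
        push_cast
        ring
      exact Real.not_summable_one_div_natCast h2
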